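/- arXiv:2605.26852 — 2 statements merged into one kernel-verified Lean document; each statement's English description precedes it below -/
import Mathlib

section
/- Let p ≥ 1 be an integer and let N be a p-rooted almost-binary phylogenetic network on X. Then the edge sets of the maximal zig-zag trails of N form a partition of E(N); that is, N is decomposed into the set {Z_1, ..., Z_d} of its maximal zig-zag trails, and this is the unique decomposition of N into maximal zig-zag trails. -/
open Finset

variable {V : Type} [DecidableEq V] [Fintype V]

/-- The vertex set of the digraph given by the edge set `E`. -/
def verts (E : Finset (V × V)) : Finset V :=
  E.image Prod.fst ∪ E.image Prod.snd

/-- In-degree of `v` in the digraph with edge set `E`. -/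
def indeg (E : Finset (V × V)) (v : V) : ℕ :=
  (E.filter fun e => e.2 = v).card

/-- Out-degree of `v` in the digraph with edge set `E`. -/
def outdeg (E : Finset (V × V)) (v : V) : ℕ :=
  (E.filter fun e => e.1 = v).card

/-- `E` is (the edge set of) a `p`-rooted almost-binary phylogenetic network on `X`:
a finite simple DAG with exactly `p` in-degree-0 vertices, each of out-degree 1 or 2 (the roots),
whose set of in-degree-1, out-degree-0 vertices is `X` (the leaves), and all of whose other
vertices have in-degree and out-degree in `{1, 2}`. -/
structure IsPhyloNet (E : Finset (V × V)) (p : ℕ) (X : Finset V) : Prop where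
  acyclic : ∀ v : V, ¬ Relation.TransGen (fun a b => (a, b) ∈ E) v v
  roots_card : ((verts E).filter fun v => indeg E v = 0).card = p
  root_outdeg : ∀ v ∈ verts E, indeg E v = 0 → outdeg E v = 1 ∨ outdeg E v = 2
  leaves_eq : (verts E).filter (fun v => indeg E v = 1 ∧ outdeg E v = 0) = X
  internal_deg : ∀ v ∈ verts E, indeg E v ≠ 0 → v ∉ X →
    (indeg E v = 1 ∨ indeg E v = 2) ∧ (outdeg E v = 1 ∨ outdeg E v = 2)

/-- Two directed edges share a tail or share a head. -/
def Shares (e f : V × V) : Prop := e.1 = f.1 ∨ e.2 = f.2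

/-- `S` is (the edge set of) a zig-zag trail of the digraph `E`: a subgraph with `m ≥ 1`
edges which can be ordered so that consecutive edges share a head or share a tail. -/
def IsZigzagTrail (E S : Finset (V × V)) : Prop :=
  S ⊆ E ∧ ∃ l : List (V × V), l ≠ [] ∧ l.Nodup ∧ l.toFinset = S ∧ l.Chain' Shares

/-- A maximal zig-zag trail: one that is not a proper subgraph of another zig-zag trail. -/
def IsMaximalZigzagTrail (E S : Finset (V × V)) : Prop :=
  IsZigzagTrail E S ∧ ∀ S', IsZigzagTrail E S' → ¬ S ⊂ S'

/-- The `i`-th edge (0-indexed) of a zig-zag sequence on vertices `f 0, f 1, ...`;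
when `down = true` the first edge descends (`f 0 > f 1`), and directions alternate. -/
def zigEdge (f : ℕ → V) (down : Bool) (i : ℕ) : V × V :=
  if decide (i % 2 = 0) = down then (f i, f (i + 1)) else (f (i + 1), f i)

/-- `S` consists of the `m` distinct edges of the zig-zag sequence on `f 0, ..., f m`. -/
def IsZigzagShape (S : Finset (V × V)) (m : ℕ) (f : ℕ → V) (down : Bool) : Prop :=
  S = (Finset.range m).image (zigEdge f down) ∧
  ∀ i < m, ∀ j < m, zigEdge f down i = zigEdge f down j → i = j

/-- A crown: an even number `m` of edges written cyclically as `v₀ > v₁ < ⋯ < v_m = v₀`. -/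
def IsCrown (S : Finset (V × V)) : Prop :=
  ∃ m f, 1 ≤ m ∧ m % 2 = 0 ∧ f m = f 0 ∧ IsZigzagShape S m f true

/-- An M-fence: a non-crown with an even number `m` of edges,
of the form `v₀ < v₁ > ⋯ > v_m ≠ v₀`. -/
def IsMFence (S : Finset (V × V)) : Prop :=
  ¬ IsCrown S ∧ ∃ m f, 1 ≤ m ∧ m % 2 = 0 ∧ f m ≠ f 0 ∧ IsZigzagShape S m f false

/-- A W-fence: a non-crown with an even number `m` of edges,
of the form `v₀ > v₁ < ⋯ < v_m ≠ v₀`. -/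
def IsWFence (S : Finset (V × V)) : Prop :=
  ¬ IsCrown S ∧ ∃ m f, 1 ≤ m ∧ m % 2 = 0 ∧ f m ≠ f 0 ∧ IsZigzagShape S m f true

/-- An N-fence: a non-crown with an odd number `m` of edges,
of the form `v₀ > v₁ < ⋯ > v_m`. -/
def IsNFence (S : Finset (V × V)) : Prop :=
  ¬ IsCrown S ∧ ∃ m f, m % 2 = 1 ∧ IsZigzagShape S m f true

/-- A support network of `N = (V, E)`: a spanning subgraph that is itself a
`p`-rooted almost-binary phylogenetic network on `X` (identified with its edge set). -/
def IsSupportNet (E S : Finset (V × V)) (p : ℕ) (X : Finset V) : Prop :=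
  S ⊆ E ∧ verts S = verts E ∧ IsPhyloNet S p X

/-- A minimal support network: no support network is a proper subgraph of it. -/
def IsMinimalSupportNet (E S : Finset (V × V)) (p : ℕ) (X : Finset V) : Prop :=
  IsSupportNet E S p X ∧ ∀ S', IsSupportNet E S' p X → ¬ S' ⊂ S

/-- A minimum support network: one with the fewest edges among all support networks. -/
def IsMinimumSupportNet (E S : Finset (V × V)) (p : ℕ) (X : Finset V) : Prop :=
  IsSupportNet E S p X ∧ ∀ S', IsSupportNet E S' p X → S.card ≤ S'.card

/-- `S ⊆ Z` is A-admissible (degrees taken in the ambient network `E`):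
(C1) `S` contains every edge `(u,v)` of `Z` with `outdeg u = 1` or `indeg v = 1`;
(C2) of any two distinct edges of `Z` sharing a tail or a head, `S` contains at least one. -/
def AAdmissible (E Z S : Finset (V × V)) : Prop :=
  S ⊆ Z ∧
  (∀ e ∈ Z, (outdeg E e.1 = 1 ∨ indeg E e.2 = 1) → e ∈ S) ∧
  (∀ e₁ ∈ Z, ∀ e₂ ∈ Z, e₁ ≠ e₂ → Shares e₁ e₂ → e₁ ∈ S ∨ e₂ ∈ S)

/-- A B-admissible subset: an A-admissible subset none of whose proper subsets
is A-admissible. -/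
def BAdmissible (E Z S : Finset (V × V)) : Prop :=
  AAdmissible E Z S ∧ ∀ S', S' ⊂ S → ¬ AAdmissible E Z S'

/-- A C-admissible subset: an A-admissible subset of minimum cardinality. -/
def CAdmissible (E Z S : Finset (V × V)) : Prop :=
  AAdmissible E Z S ∧ ∀ S', AAdmissible E Z S' → S.card ≤ S'.card

/-- One subdivision step: an edge `(u, v)` is replaced by `(u, w), (w, v)` for a fresh
vertex `w`. -/
def SubdivStep (T T' : Finset (V × V)) : Prop :=
  ∃ u w v, (u, v) ∈ T ∧ w ∉ verts T ∧
    T' = insert (u, w) (insert (w, v) (T.erase (u, v)))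

/-- `S` is a subdivision of `T` (zero or more subdivision steps). -/
def IsSubdivisionOf (S T : Finset (V × V)) : Prop :=
  Relation.ReflTransGen SubdivStep T S

/-- A rooted binary phylogenetic tree on `X`: a 1-rooted network on `X` in which every
non-root, non-leaf vertex has in-degree 1 and out-degree 2. -/
def IsBinaryPhyloTree (T : Finset (V × V)) (X : Finset V) : Prop :=
  IsPhyloNet T 1 X ∧
  ∀ v ∈ verts T, indeg T v ≠ 0 → v ∉ X → indeg T v = 1 ∧ outdeg T v = 2

/-- `N = (V, E)` is tree-based: it has a support tree, i.e. a spanning subgraph that is a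
subdivision of some rooted binary phylogenetic tree on `X`. -/
def IsTreeBased (E : Finset (V × V)) (X : Finset V) : Prop :=
  ∃ S T, S ⊆ E ∧ verts S = verts E ∧ IsBinaryPhyloTree T X ∧ IsSubdivisionOf S T

/-- The underlying undirected simple graph of the digraph with edge set `S`. -/
def usym (S : Finset (V × V)) : SimpleGraph V where
  Adj u v := u ≠ v ∧ ((u, v) ∈ S ∨ (v, u) ∈ S)
  symm := ⟨fun _ _ h => ⟨h.1.symm, h.2.symm⟩⟩
  loopless := ⟨fun _ h => h.1 rfl⟩

/-- Two edges of `S` lie in a common block of the underlying undirected graph: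
they are equal or lie on a common cycle. -/
def SameBlock (S : Finset (V × V)) (e f : V × V) : Prop :=
  e = f ∨ ∃ (a : V) (w : (usym S).Walk a a), w.IsCycle ∧
    s(e.1, e.2) ∈ w.edges ∧ s(f.1, f.2) ∈ w.edges

/-- The number of reticulations (in-degree-2 vertices) contained in the block of the
edge `e` of `S`. -/
noncomputable def blockReticCount (S : Finset (V × V)) (e : V × V) : ℕ :=
  Set.ncard {v : V | indeg S v = 2 ∧ ∃ f ∈ S, SameBlock S e f ∧ (f.1 = v ∨ f.2 = v)}

/-- The level of the network with edge set `S`: the maximum number of reticulations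
contained in a block. -/
noncomputable def level (S : Finset (V × V)) : ℕ :=
  S.sup (blockReticCount S)

-- ====== aux ======

lemma outdeg_le_two {E : Finset (V × V)} {p : ℕ} {X : Finset V}
    (h : IsPhyloNet E p X) (v : V) : outdeg E v ≤ 2 := by
  by_cases h0 : outdeg E v = 0
  · omega
  · have hex : ∃ e ∈ E, e.1 = v := by
      rcases Finset.filter_nonempty_iff.mp (Finset.card_pos.mp (Nat.pos_of_ne_zero h0)) with ⟨e, he, h1⟩
      exact ⟨e, he, h1⟩
    obtain ⟨e, he, he1⟩ := hex
    have hv : v ∈ verts E := Finset.mem_union_left _ (Finset.mem_image.mpr ⟨e, he, he1⟩)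
    by_cases hi : indeg E v = 0
    · rcases h.root_outdeg v hv hi with h1 | h1 <;> omega
    · by_cases hx : v ∈ X
      · rw [← h.leaves_eq] at hx
        have := (Finset.mem_filter.mp hx).2.2
        omega
      · rcases (h.internal_deg v hv hi hx).2 with h1 | h1 <;> omega

lemma indeg_le_two {E : Finset (V × V)} {p : ℕ} {X : Finset V}
    (h : IsPhyloNet E p X) (v : V) : indeg E v ≤ 2 := by
  by_cases h0 : indeg E v = 0
  · omega
  · have hex : ∃ e ∈ E, e.2 = v := by
      rcases Finset.filter_nonempty_iff.mp (Finset.card_pos.mp (Nat.pos_of_ne_zero h0)) with ⟨e, he, h1⟩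
      exact ⟨e, he, h1⟩
    obtain ⟨e, he, he2⟩ := hex
    have hv : v ∈ verts E := Finset.mem_union_right _ (Finset.mem_image.mpr ⟨e, he, he2⟩)
    by_cases hx : v ∈ X
    · rw [← h.leaves_eq] at hx
      have := (Finset.mem_filter.mp hx).2.1
      omega
    · rcases (h.internal_deg v hv h0 hx).1 with h1 | h1 <;> omega

lemma shares_symm {e f : V × V} (h : Shares e f) : Shares f e := h.imp Eq.symm Eq.symm

lemma three_nbrs {E : Finset (V × V)} {p : ℕ} {X : Finset V} (hN : IsPhyloNet E p X)
    {f a b c : V × V} (hf : f ∈ E) (ha : a ∈ E) (hb : b ∈ E) (hc : c ∈ E)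
    (nfa : f ≠ a) (nfb : f ≠ b) (nfc : f ≠ c)
    (sa : Shares f a) (sb : Shares f b) (sc : Shares f c)
    (hab : a ≠ b) (hac : a ≠ c) (hbc : b ≠ c) : False := by
  classical
  set tN := (E.filter fun g => g.1 = f.1).erase f with htN
  set hNs := (E.filter fun g => g.2 = f.2).erase f with hhN
  have htc : tN.card ≤ 1 := by
    have h2 : (E.filter fun g => g.1 = f.1).card ≤ 2 := outdeg_le_two hN f.1
    have hfm : f ∈ E.filter fun g => g.1 = f.1 := Finset.mem_filter.mpr ⟨hf, rfl⟩
    rw [htN, Finset.card_erase_of_mem hfm]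
    omega
  have hhc : hNs.card ≤ 1 := by
    have h2 : (E.filter fun g => g.2 = f.2).card ≤ 2 := indeg_le_two hN f.2
    have hfm : f ∈ E.filter fun g => g.2 = f.2 := Finset.mem_filter.mpr ⟨hf, rfl⟩
    rw [hhN, Finset.card_erase_of_mem hfm]
    omega
  have key : ∀ x, x ∈ E → f ≠ x → Shares f x → x ∈ tN ∪ hNs := by
    intro x hx hne hs
    rcases hs with h1 | h1
    · exact Finset.mem_union_left _ (Finset.mem_erase.mpr ⟨hne.symm, Finset.mem_filter.mpr ⟨hx, h1.symm⟩⟩)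
    · exact Finset.mem_union_right _ (Finset.mem_erase.mpr ⟨hne.symm, Finset.mem_filter.mpr ⟨hx, h1.symm⟩⟩)
  have hsub : ({a, b, c} : Finset (V × V)) ⊆ tN ∪ hNs := by
    intro x hx
    simp only [Finset.mem_insert, Finset.mem_singleton] at hx
    rcases hx with rfl | rfl | rfl
    · exact key _ ha nfa sa
    · exact key _ hb nfb sb
    · exact key _ hc nfc sc
  have h3 : ({a, b, c} : Finset (V × V)).card = 3 := by
    rw [Finset.card_insert_of_notMem (by simp [hab, hac]),
        Finset.card_insert_of_notMem (by simp [hbc]), Finset.card_singleton]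
  have := Finset.card_le_card hsub
  have := Finset.card_union_le tN hNs
  omega

def GoodList (E : Finset (V × V)) (l : List (V × V)) : Prop :=
  l ≠ [] ∧ l.Nodup ∧ l.Chain' Shares ∧ ∀ f ∈ l, f ∈ E

lemma extend (E : Finset (V × V)) : ∀ (k : ℕ) (l : List (V × V)), GoodList E l →
    E.card ≤ l.length + k →
    ∃ l', GoodList E l' ∧ (∀ f ∈ l, f ∈ l') ∧
      ∀ g ∈ E, g ∉ l' → ¬ (g :: l').Chain' Shares ∧ ¬ (l' ++ [g]).Chain' Shares := by
  intro k
  induction k with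
  | zero =>
    intro l hl hlen
    refine ⟨l, hl, fun f hf => hf, fun g hg hgl => absurd ?_ hgl⟩
    have h1 : l.toFinset ⊆ E := fun x hx => hl.2.2.2 x (List.mem_toFinset.mp hx)
    have h2 : l.toFinset.card = l.length := List.toFinset_card_of_nodup hl.2.1
    have : E ⊆ l.toFinset := Finset.eq_of_subset_of_card_le h1 (by omega) ▸ Finset.Subset.refl _
    exact List.mem_toFinset.mp (this hg)
  | succ k ih =>
    intro l hl hlen
    by_cases hext : ∃ g ∈ E, g ∉ l ∧ ((g :: l).Chain' Shares ∨ (l ++ [g]).Chain' Shares)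
    · obtain ⟨g, hg, hgl, hc⟩ := hext
      rcases hc with hc | hc
      · obtain ⟨l', h1, h2, h3⟩ := ih (g :: l)
          ⟨List.cons_ne_nil _ _, List.nodup_cons.mpr ⟨hgl, hl.2.1⟩, hc,
           fun f hf => by rcases List.mem_cons.mp hf with rfl | hf; exact hg; exact hl.2.2.2 f hf⟩
          (by simp; omega)
        exact ⟨l', h1, fun f hf => h2 f (List.mem_cons_of_mem _ hf), h3⟩
      · obtain ⟨l', h1, h2, h3⟩ := ih (l ++ [g])
          ⟨by simp, by
            rw [List.nodup_append]
            exact ⟨hl.2.1, List.nodup_singleton g, fun a ha b hb => by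
              rw [List.mem_singleton] at hb; exact hb ▸ fun h => hgl (h ▸ ha)⟩, hc,
           fun f hf => by
            rcases List.mem_append.mp hf with hf | hf
            · exact hl.2.2.2 f hf
            · simpa using (List.mem_singleton.mp hf ▸ hg)⟩
          (by simp; omega)
        exact ⟨l', h1, fun f hf => h2 f (List.mem_append_left _ hf), h3⟩
    · push_neg at hext
      refine ⟨l, hl, fun f hf => hf, fun g hg hgl => ?_⟩
      exact hext g hg hgl

lemma closed_of_maximal {E : Finset (V × V)} {p : ℕ} {X : Finset V} (hN : IsPhyloNet E p X)
    {l : List (V × V)} (hl : GoodList E l)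
    (hmax : ∀ g ∈ E, g ∉ l → ¬ (g :: l).Chain' Shares ∧ ¬ (l ++ [g]).Chain' Shares) :
    ∀ f ∈ l, ∀ g ∈ E, g ∉ l → f ≠ g → ¬ Shares f g := by
  intro f hf g hg hgl hfg hs
  obtain ⟨l₁, l₂, rfl⟩ := List.append_of_mem hf
  rcases eq_or_ne l₁ [] with rfl | h1
  · simp only [List.nil_append] at hl hmax hgl
    exact (hmax g hg hgl).1 (List.isChain_cons.mpr ⟨fun y hy => by
      simp at hy; exact hy ▸ shares_symm hs, hl.2.2.1⟩)
  · rcases eq_or_ne l₂ [] with rfl | h2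
    · refine (hmax g hg hgl).2 ?_
      simp only [List.Chain']
      rw [List.isChain_append]
      refine ⟨hl.2.2.1, List.isChain_singleton g, fun x hx y hy => ?_⟩
      simp only [List.head?_cons, Option.mem_def, Option.some.injEq] at hy
      rw [show (l₁ ++ [f]).getLast? = some f from List.getLast?_concat] at hx
      simp only [Option.mem_def, Option.some.injEq] at hx
      subst hx; subst hy; exact hs
    · -- interior case
      obtain ⟨a, hal⟩ := List.exists_mem_of_ne_nil l₁ h1
      have hgl1 : l₁.getLast? = some (l₁.getLast h1) := List.getLast?_eq_getLast h1
      set A := l₁.getLast h1 with hA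
      obtain ⟨B, t, rfl⟩ := List.exists_cons_of_ne_nil h2
      have hchain := hl.2.2.1
      simp only [List.Chain'] at hchain
      rw [List.isChain_append] at hchain
      obtain ⟨hc1, hc2, hc3⟩ := hchain
      have hsAf : Shares A f := hc3 A hgl1 f rfl
      have hsfB : Shares f B := (List.isChain_cons.mp hc2).1 B rfl
      have hnd := hl.2.1
      rw [List.nodup_append] at hnd
      obtain ⟨hnd1, hnd2, hdisj⟩ := hnd
      have hAl1 : A ∈ l₁ := List.getLast_mem h1
      have hBm : B ∈ f :: B :: t := by simp
      have hfA : f ≠ A := fun h => hdisj f (h ▸ hAl1) f (by simp) rfl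
      have hfB : f ≠ B := fun h => (List.nodup_cons.mp hnd2).1 (h ▸ by simp)
      have hAB : A ≠ B := fun h => hdisj A hAl1 B hBm h
      have hAg : A ≠ g := fun h => hgl (h ▸ List.mem_append_left _ hAl1)
      have hBg : B ≠ g := fun h => hgl (h ▸ List.mem_append_right _ (by simp))
      exact three_nbrs hN (hl.2.2.2 f hf) (hl.2.2.2 A (List.mem_append_left _ hAl1))
        (hl.2.2.2 B (List.mem_append_right _ (by simp))) hg
        hfA hfB hfg (shares_symm hsAf) hsfB hs hAB hAg hBg

lemma prop_forward {E : Finset (V × V)} {l : List (V × V)}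
    (hcl : ∀ f ∈ l, ∀ g ∈ E, g ∉ l → f ≠ g → ¬ Shares f g) :
    ∀ l' : List (V × V), l'.Chain' Shares → (∀ f ∈ l', f ∈ E) →
      (∀ a, l'.head? = some a → a ∈ l) → ∀ f ∈ l', f ∈ l := by
  intro l'
  induction l' with
  | nil => simp
  | cons a t ih =>
    intro hc hE hh f hf
    have ha : a ∈ l := hh a rfl
    rcases List.mem_cons.mp hf with rfl | hf
    · exact ha
    · refine ih (List.isChain_cons.mp hc).2 (fun x hx => hE x (List.mem_cons_of_mem _ hx)) ?_ f hf
      intro b hb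
      have hbt : b ∈ t := List.mem_of_mem_head? hb
      by_cases hab : a = b
      · exact hab ▸ ha
      by_contra hbl
      exact hcl a ha b (hE b (List.mem_cons_of_mem _ hbt)) hbl hab
        ((List.isChain_cons.mp hc).1 b hb)

lemma prop_all {E : Finset (V × V)} {l : List (V × V)}
    (hcl : ∀ f ∈ l, ∀ g ∈ E, g ∉ l → f ≠ g → ¬ Shares f g)
    {l' : List (V × V)} (hc : l'.Chain' Shares) (hE : ∀ f ∈ l', f ∈ E)
    {e : V × V} (hel' : e ∈ l') (hel : e ∈ l) : ∀ f ∈ l', f ∈ l := by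
  obtain ⟨s, t, rfl⟩ := List.append_of_mem hel'
  simp only [List.Chain'] at hc
  rw [List.isChain_append] at hc
  obtain ⟨hc1, hc2, hc3⟩ := hc
  have hfwd : ∀ f ∈ e :: t, f ∈ l :=
    prop_forward hcl (e :: t) hc2 (fun f hf => hE f (List.mem_append_right _ hf))
      (fun a ha => by simp at ha; exact ha ▸ hel)
  have hback : ∀ f ∈ s, f ∈ l := by
    have hcs : (s ++ [e]).Chain' Shares := by
      simp only [List.Chain']
      rw [List.isChain_append]
      exact ⟨hc1, List.isChain_singleton e, fun x hx y hy => by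
        simp only [List.head?_cons, Option.mem_def, Option.some.injEq] at hy
        exact hy ▸ hc3 x hx e rfl⟩
    have hrev : (s ++ [e]).reverse.Chain' Shares := by
      simp only [List.Chain']
      rw [List.isChain_reverse]
      exact (show List.IsChain Shares (s ++ [e]) from hcs).imp fun _ _ h => shares_symm h
    have := prop_forward hcl (s ++ [e]).reverse hrev
      (fun f hf => by
        rcases List.mem_append.mp (List.mem_reverse.mp hf) with hf | hf
        · exact hE f (List.mem_append_left _ hf)
        · exact hE f (by simp at hf; exact hf ▸ List.mem_append_right _ (by simp)))
      (fun a ha => by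
        rw [List.reverse_append] at ha
        simp at ha
        exact ha ▸ hel)
    intro f hf
    exact this f (List.mem_reverse.mpr (List.mem_append_left _ hf))
  intro f hf
  rcases List.mem_append.mp hf with hf | hf
  · exact hback f hf
  · exact hfwd f hf

lemma main_exists_unique {E : Finset (V × V)} {p : ℕ} {X : Finset V}
    (hN : IsPhyloNet E p X) {e : V × V} (he : e ∈ E) :
    ∃! S : Finset (V × V), IsMaximalZigzagTrail E S ∧ e ∈ S := by
  obtain ⟨l, hl, hmem, hmax⟩ := extend E E.card [e]
    ⟨List.cons_ne_nil _ _, List.nodup_singleton e, List.isChain_singleton e,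
     fun f hf => by simp at hf; exact hf ▸ he⟩ (by simp)
  have hel : e ∈ l := hmem e (by simp)
  have hcl := closed_of_maximal hN hl hmax
  have hsub : l.toFinset ⊆ E := fun x hx => hl.2.2.2 x (List.mem_toFinset.mp hx)
  have htrail : IsZigzagTrail E l.toFinset := ⟨hsub, l, hl.1, hl.2.1, rfl, hl.2.2.1⟩
  -- any trail containing e is ⊆ l.toFinset
  have hkey : ∀ S', IsZigzagTrail E S' → e ∈ S' → S' ⊆ l.toFinset := by
    rintro S' ⟨hS'E, l', hne', hnd', rfl, hc'⟩ heS'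
    intro f hf
    exact List.mem_toFinset.mpr (prop_all hcl hc'
      (fun x hx => hS'E (List.mem_toFinset.mpr hx)) (List.mem_toFinset.mp heS') hel
      f (List.mem_toFinset.mp hf))
  have hmaxi : IsMaximalZigzagTrail E l.toFinset := by
    refine ⟨htrail, fun S' hS' hss => ?_⟩
    rcases hss with ⟨hsub1, hnsub⟩
    rcases hS' with ⟨hS'E, l', hne', hnd', rfl, hc'⟩
    have heS' : e ∈ l'.toFinset := hsub1 (List.mem_toFinset.mpr hel)
    exact hnsub (hkey _ ⟨hS'E, l', hne', hnd', rfl, hc'⟩ heS')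
  refine ⟨l.toFinset, ⟨hmaxi, List.mem_toFinset.mpr hel⟩, ?_⟩
  rintro S'' ⟨hS''max, heS''⟩
  have hss : S'' ⊆ l.toFinset := hkey S'' hS''max.1 heS''
  rcases eq_or_ne S'' l.toFinset with h | h
  · exact h
  · exact absurd (Finset.ssubset_iff_subset_ne.mpr ⟨hss, h⟩) (hS''max.2 _ htrail)


/-- The maximal zig-zag trails of a `p`-rooted almost-binary phylogenetic network partition
its edge set, and this is the unique decomposition into maximal zig-zag trails. -/
theorem stmt0 (p : ℕ) (hp : 1 ≤ p) (X : Finset V) (hX : X.Nonempty)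
    (E : Finset (V × V)) (hN : IsPhyloNet E p X) :
    (∀ e ∈ E, ∃! S : Finset (V × V), IsMaximalZigzagTrail E S ∧ e ∈ S) ∧
    (∀ P : Set (Finset (V × V)),
      (∀ S ∈ P, IsMaximalZigzagTrail E S) →
      P.PairwiseDisjoint id →
      (⋃ S ∈ P, (S : Set (V × V))) = (E : Set (V × V)) →
      P = {S | IsMaximalZigzagTrail E S}) := by
  
  refine ⟨fun e he => main_exists_unique hN he, fun P hP _ hcov => ?_⟩
  ext S
  simp only [Set.mem_setOf_eq]
  constructor
  · exact hP S
  · intro hS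
    obtain ⟨hSE, l, hne, _, hlS, _⟩ := hS.1
    obtain ⟨e, hel⟩ := List.exists_mem_of_ne_nil l hne
    have heS : e ∈ S := hlS ▸ List.mem_toFinset.mpr hel
    have heE : e ∈ E := hSE heS
    have : (e : V × V) ∈ (⋃ S ∈ P, (S : Set (V × V))) := hcov ▸ (by exact_mod_cast heE)
    obtain ⟨T, hTP, heT⟩ := by simpa using this
    obtain ⟨S₀, _, huniq⟩ := main_exists_unique hN heE
    have h1 : S = S₀ := huniq S ⟨hS, heS⟩
    have h2 : T = S₀ := huniq T ⟨hP T hTP, heT⟩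
    rwa [h1, ← h2]
end

section
/- Let p ≥ 1 be an integer and let N be a p-rooted almost-binary phylogenetic network on X. Then the map S ↦ N[S] (the subgraph of N induced by the edge set S) is a bijection from the family of A-admissible subsets of E(N) onto the family A_N of all support networks of N; in particular, for S ⊆ E(N), the induced subgraph N[S] is a support network of N if and only if S is an A-admissible subset of E(N). -/
open Finset

variable {V : Type} [DecidableEq V] [Fintype V]

private lemma mem_verts_tail {E : Finset (V × V)} {e : V × V} (he : e ∈ E) : e.1 ∈ verts E :=
  Finset.mem_union_left _ (Finset.mem_image_of_mem _ he)

private lemma mem_verts_head {E : Finset (V × V)} {e : V × V} (he : e ∈ E) : e.2 ∈ verts E :=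
  Finset.mem_union_right _ (Finset.mem_image_of_mem _ he)

private lemma verts_mono {S E : Finset (V × V)} (h : S ⊆ E) : verts S ⊆ verts E :=
  Finset.union_subset_union (Finset.image_subset_image h) (Finset.image_subset_image h)

private lemma indeg_mono {S E : Finset (V × V)} (h : S ⊆ E) (v : V) : indeg S v ≤ indeg E v :=
  Finset.card_le_card (Finset.filter_subset_filter _ h)

private lemma outdeg_mono {S E : Finset (V × V)} (h : S ⊆ E) (v : V) : outdeg S v ≤ outdeg E v :=
  Finset.card_le_card (Finset.filter_subset_filter _ h)

private lemma verts_of_indeg_pos {E : Finset (V × V)} {v : V} (h : indeg E v ≠ 0) :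
    v ∈ verts E := by
  obtain ⟨e, he⟩ := Finset.card_pos.mp (Nat.pos_of_ne_zero h)
  rw [Finset.mem_filter] at he
  exact he.2 ▸ mem_verts_head he.1

private lemma verts_of_outdeg_pos {E : Finset (V × V)} {v : V} (h : outdeg E v ≠ 0) :
    v ∈ verts E := by
  obtain ⟨e, he⟩ := Finset.card_pos.mp (Nat.pos_of_ne_zero h)
  rw [Finset.mem_filter] at he
  exact he.2 ▸ mem_verts_tail he.1

private lemma leaf_spec {E : Finset (V × V)} {p : ℕ} {X : Finset V}
    (hN : IsPhyloNet E p X) {v : V} (hv : v ∈ X) :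
    v ∈ verts E ∧ indeg E v = 1 ∧ outdeg E v = 0 := by
  rw [← hN.leaves_eq] at hv
  have h := Finset.mem_filter.mp hv
  exact ⟨h.1, h.2.1, h.2.2⟩

private lemma deg_le_two {E : Finset (V × V)} {p : ℕ} {X : Finset V}
    (hN : IsPhyloNet E p X) {v : V} (hv : v ∈ verts E) :
    indeg E v ≤ 2 ∧ outdeg E v ≤ 2 := by
  by_cases h0 : indeg E v = 0
  · rcases hN.root_outdeg v hv h0 with h | h <;> omega
  · by_cases hx : v ∈ X
    · have := (leaf_spec hN hx).2; omega
    · have := hN.internal_deg v hv h0 hx; omega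

private lemma indeg_one_edge {E : Finset (V × V)} {v : V} (h : indeg E v = 1) :
    ∃ e, e ∈ E ∧ e.2 = v ∧ ∀ f ∈ E, f.2 = v → f = e := by
  obtain ⟨e, he⟩ := Finset.card_eq_one.mp h
  have hm : e ∈ E.filter (fun f => f.2 = v) := he ▸ Finset.mem_singleton_self e
  rw [Finset.mem_filter] at hm
  refine ⟨e, hm.1, hm.2, fun f hf hfv => ?_⟩
  have hf' : f ∈ E.filter (fun f => f.2 = v) := Finset.mem_filter.mpr ⟨hf, hfv⟩
  rw [he] at hf'; exact Finset.mem_singleton.mp hf'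

private lemma outdeg_one_edge {E : Finset (V × V)} {v : V} (h : outdeg E v = 1) :
    ∃ e, e ∈ E ∧ e.1 = v ∧ ∀ f ∈ E, f.1 = v → f = e := by
  obtain ⟨e, he⟩ := Finset.card_eq_one.mp h
  have hm : e ∈ E.filter (fun f => f.1 = v) := he ▸ Finset.mem_singleton_self e
  rw [Finset.mem_filter] at hm
  refine ⟨e, hm.1, hm.2, fun f hf hfv => ?_⟩
  have hf' : f ∈ E.filter (fun f => f.1 = v) := Finset.mem_filter.mpr ⟨hf, hfv⟩
  rw [he] at hf'; exact Finset.mem_singleton.mp hf'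

private lemma indeg_two_edges {E : Finset (V × V)} {v : V} (h : indeg E v = 2) :
    ∃ e₁ e₂, e₁ ≠ e₂ ∧ e₁ ∈ E ∧ e₂ ∈ E ∧ e₁.2 = v ∧ e₂.2 = v := by
  obtain ⟨e₁, e₂, hne, he⟩ := Finset.card_eq_two.mp h
  have h1 : e₁ ∈ E.filter (fun f => f.2 = v) := he ▸ Finset.mem_insert_self _ _
  have h2 : e₂ ∈ E.filter (fun f => f.2 = v) := he ▸ Finset.mem_insert_of_mem (Finset.mem_singleton_self _)
  rw [Finset.mem_filter] at h1 h2
  exact ⟨e₁, e₂, hne, h1.1, h2.1, h1.2, h2.2⟩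

private lemma outdeg_two_edges {E : Finset (V × V)} {v : V} (h : outdeg E v = 2) :
    ∃ e₁ e₂, e₁ ≠ e₂ ∧ e₁ ∈ E ∧ e₂ ∈ E ∧ e₁.1 = v ∧ e₂.1 = v := by
  obtain ⟨e₁, e₂, hne, he⟩ := Finset.card_eq_two.mp h
  have h1 : e₁ ∈ E.filter (fun f => f.1 = v) := he ▸ Finset.mem_insert_self _ _
  have h2 : e₂ ∈ E.filter (fun f => f.1 = v) := he ▸ Finset.mem_insert_of_mem (Finset.mem_singleton_self _)
  rw [Finset.mem_filter] at h1 h2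
  exact ⟨e₁, e₂, hne, h1.1, h2.1, h1.2, h2.2⟩

private lemma adm_indeg_pos {E S : Finset (V × V)} {p : ℕ} {X : Finset V}
    (hN : IsPhyloNet E p X) (hA : AAdmissible E E S) {v : V} (h : indeg E v ≠ 0) :
    1 ≤ indeg S v := by
  have hv : v ∈ verts E := verts_of_indeg_pos h
  have h2 := (deg_le_two hN hv).1
  have h12 : indeg E v = 1 ∨ indeg E v = 2 := by omega
  rcases h12 with h1 | h1
  · obtain ⟨e, heE, he2, _⟩ := indeg_one_edge h1
    have heS : e ∈ S := hA.2.1 e heE (Or.inr (he2 ▸ h1))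
    exact Finset.card_pos.mpr ⟨e, Finset.mem_filter.mpr ⟨heS, he2⟩⟩
  · obtain ⟨e₁, e₂, hne, h₁, h₂, hv1, hv2⟩ := indeg_two_edges h1
    rcases hA.2.2 e₁ h₁ e₂ h₂ hne (Or.inr (hv1.trans hv2.symm)) with hs | hs
    · exact Finset.card_pos.mpr ⟨e₁, Finset.mem_filter.mpr ⟨hs, hv1⟩⟩
    · exact Finset.card_pos.mpr ⟨e₂, Finset.mem_filter.mpr ⟨hs, hv2⟩⟩

private lemma adm_outdeg_pos {E S : Finset (V × V)} {p : ℕ} {X : Finset V}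
    (hN : IsPhyloNet E p X) (hA : AAdmissible E E S) {v : V} (h : outdeg E v ≠ 0) :
    1 ≤ outdeg S v := by
  have hv : v ∈ verts E := verts_of_outdeg_pos h
  have h2 := (deg_le_two hN hv).2
  have h12 : outdeg E v = 1 ∨ outdeg E v = 2 := by omega
  rcases h12 with h1 | h1
  · obtain ⟨e, heE, he1, _⟩ := outdeg_one_edge h1
    have heS : e ∈ S := hA.2.1 e heE (Or.inl (he1 ▸ h1))
    exact Finset.card_pos.mpr ⟨e, Finset.mem_filter.mpr ⟨heS, he1⟩⟩
  · obtain ⟨e₁, e₂, hne, h₁, h₂, hv1, hv2⟩ := outdeg_two_edges h1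
    rcases hA.2.2 e₁ h₁ e₂ h₂ hne (Or.inl (hv1.trans hv2.symm)) with hs | hs
    · exact Finset.card_pos.mpr ⟨e₁, Finset.mem_filter.mpr ⟨hs, hv1⟩⟩
    · exact Finset.card_pos.mpr ⟨e₂, Finset.mem_filter.mpr ⟨hs, hv2⟩⟩

private lemma support_iff_adm {E : Finset (V × V)} {p : ℕ} {X : Finset V}
    (hN : IsPhyloNet E p X) (S : Finset (V × V)) :
    IsSupportNet E S p X ↔ AAdmissible E E S := by
  constructor
  · rintro ⟨hSE, hvert, hP⟩
    have hroots : (verts E).filter (fun v => indeg E v = 0)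
        = (verts E).filter (fun v => indeg S v = 0) := by
      apply Finset.eq_of_subset_of_card_le
      · intro v hv
        rw [Finset.mem_filter] at hv ⊢
        have := indeg_mono hSE v
        exact ⟨hv.1, by omega⟩
      · have h1 := hP.roots_card
        rw [hvert] at h1
        rw [h1, hN.roots_card]
    have hSroot : ∀ v ∈ verts E, indeg S v = 0 → indeg E v = 0 := by
      intro v hv h0
      have hm : v ∈ (verts E).filter (fun v => indeg S v = 0) :=
        Finset.mem_filter.mpr ⟨hv, h0⟩
      rw [← hroots] at hm
      exact (Finset.mem_filter.mp hm).2
    have hSout : ∀ v ∈ verts E, outdeg S v = 0 → outdeg E v = 0 := by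
      intro v hv h0
      have hvS : v ∈ verts S := hvert ▸ hv
      have hx : v ∈ X := by
        by_contra hx
        by_cases hi : indeg S v = 0
        · rcases hP.root_outdeg v hvS hi with h | h <;> omega
        · have := (hP.internal_deg v hvS hi hx).2; omega
      exact (leaf_spec hN hx).2.2
    refine ⟨hSE, ?_, ?_⟩
    · intro e he hcond
      by_contra heS
      rcases hcond with h1 | h1
      · obtain ⟨f, hfE, hf1, huniq⟩ := outdeg_one_edge h1
        have hef : e = f := huniq e he rfl
        have h0 : outdeg S e.1 = 0 := by
          have hemp : S.filter (fun g => g.1 = e.1) = ∅ := by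
            rw [Finset.eq_empty_iff_forall_notMem]
            intro g hg
            rw [Finset.mem_filter] at hg
            have := (huniq g (hSE hg.1) hg.2).trans hef.symm
            exact heS (this ▸ hg.1)
          unfold outdeg; rw [hemp]; rfl
        have := hSout e.1 (mem_verts_tail he) h0
        omega
      · obtain ⟨f, hfE, hf2, huniq⟩ := indeg_one_edge h1
        have hef : e = f := huniq e he rfl
        have h0 : indeg S e.2 = 0 := by
          have hemp : S.filter (fun g => g.2 = e.2) = ∅ := by
            rw [Finset.eq_empty_iff_forall_notMem]
            intro g hg
            rw [Finset.mem_filter] at hg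
            have := (huniq g (hSE hg.1) hg.2).trans hef.symm
            exact heS (this ▸ hg.1)
          unfold indeg; rw [hemp]; rfl
        have := hSroot e.2 (mem_verts_head he) h0
        omega
    · intro e₁ h₁ e₂ h₂ hne hsh
      by_contra hc
      push_neg at hc
      rcases hsh with hsh | hsh
      · have hsub : ({e₁, e₂} : Finset (V × V)) ⊆ E.filter (fun f => f.1 = e₁.1) := by
          intro g hg
          rcases Finset.mem_insert.mp hg with rfl | hg
          · exact Finset.mem_filter.mpr ⟨h₁, rfl⟩
          · rw [Finset.mem_singleton] at hg; subst hg
            exact Finset.mem_filter.mpr ⟨h₂, hsh.symm⟩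
        have hcard2 : ({e₁, e₂} : Finset (V × V)).card = 2 := Finset.card_pair hne
        have hle : outdeg E e₁.1 ≤ 2 := (deg_le_two hN (mem_verts_tail h₁)).2
        have heq : E.filter (fun f => f.1 = e₁.1) = {e₁, e₂} :=
          (Finset.eq_of_subset_of_card_le hsub (by rw [hcard2]; exact hle)).symm
        have h0 : outdeg S e₁.1 = 0 := by
          have hemp : S.filter (fun g => g.1 = e₁.1) = ∅ := by
            rw [Finset.eq_empty_iff_forall_notMem]
            intro g hg
            rw [Finset.mem_filter] at hg
            have hgm : g ∈ ({e₁, e₂} : Finset (V × V)) :=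
              heq ▸ Finset.mem_filter.mpr ⟨hSE hg.1, hg.2⟩
            rcases Finset.mem_insert.mp hgm with rfl | hgm
            · exact hc.1 hg.1
            · rw [Finset.mem_singleton] at hgm; subst hgm; exact hc.2 hg.1
          unfold outdeg; rw [hemp]; rfl
        have h0' := hSout e₁.1 (mem_verts_tail h₁) h0
        have h2' : outdeg E e₁.1 = 2 := by unfold outdeg; rw [heq, hcard2]
        omega
      · have hsub : ({e₁, e₂} : Finset (V × V)) ⊆ E.filter (fun f => f.2 = e₁.2) := by
          intro g hg
          rcases Finset.mem_insert.mp hg with rfl | hg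
          · exact Finset.mem_filter.mpr ⟨h₁, rfl⟩
          · rw [Finset.mem_singleton] at hg; subst hg
            exact Finset.mem_filter.mpr ⟨h₂, hsh.symm⟩
        have hcard2 : ({e₁, e₂} : Finset (V × V)).card = 2 := Finset.card_pair hne
        have hle : indeg E e₁.2 ≤ 2 := (deg_le_two hN (mem_verts_head h₁)).1
        have heq : E.filter (fun f => f.2 = e₁.2) = {e₁, e₂} :=
          (Finset.eq_of_subset_of_card_le hsub (by rw [hcard2]; exact hle)).symm
        have h0 : indeg S e₁.2 = 0 := by
          have hemp : S.filter (fun g => g.2 = e₁.2) = ∅ := by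
            rw [Finset.eq_empty_iff_forall_notMem]
            intro g hg
            rw [Finset.mem_filter] at hg
            have hgm : g ∈ ({e₁, e₂} : Finset (V × V)) :=
              heq ▸ Finset.mem_filter.mpr ⟨hSE hg.1, hg.2⟩
            rcases Finset.mem_insert.mp hgm with rfl | hgm
            · exact hc.1 hg.1
            · rw [Finset.mem_singleton] at hgm; subst hgm; exact hc.2 hg.1
          unfold indeg; rw [hemp]; rfl
        have h0' := hSroot e₁.2 (mem_verts_head h₁) h0
        have h2' : indeg E e₁.2 = 2 := by unfold indeg; rw [heq, hcard2]
        omega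
  · intro hA
    have hSE : S ⊆ E := hA.1
    have hinpos : ∀ v : V, indeg E v ≠ 0 → 1 ≤ indeg S v := fun v h => adm_indeg_pos hN hA h
    have houtpos : ∀ v : V, outdeg E v ≠ 0 → 1 ≤ outdeg S v := fun v h => adm_outdeg_pos hN hA h
    have hvert : verts S = verts E := by
      apply Finset.Subset.antisymm (verts_mono hSE)
      intro v hv
      by_cases h0 : indeg E v = 0
      · rcases hN.root_outdeg v hv h0 with h | h
        · exact verts_of_outdeg_pos (show outdeg S v ≠ 0 by have := houtpos v (by omega); omega)
        · exact verts_of_outdeg_pos (show outdeg S v ≠ 0 by have := houtpos v (by omega); omega)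
      · exact verts_of_indeg_pos (show indeg S v ≠ 0 by have := hinpos v h0; omega)
    refine ⟨hSE, hvert, ?_, ?_, ?_, ?_, ?_⟩
    · intro v h
      exact hN.acyclic v (Relation.TransGen.mono (fun a b hab => hSE hab) v v h)
    · have hfe : (verts S).filter (fun v => indeg S v = 0)
          = (verts E).filter (fun v => indeg E v = 0) := by
        rw [hvert]
        apply Finset.filter_congr
        intro v _
        constructor
        · intro h; by_contra h'; have := hinpos v h'; omega
        · intro h; have := indeg_mono hSE v; omega
      rw [hfe, hN.roots_card]
    · intro v hvS h0
      have hvE : v ∈ verts E := hvert ▸ hvS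
      have hE0 : indeg E v = 0 := by
        by_contra h'; have := hinpos v h'; omega
      have hle := outdeg_mono hSE v
      rcases hN.root_outdeg v hvE hE0 with h | h
      · have := houtpos v (by omega); omega
      · have := houtpos v (by omega); omega
    · ext v
      constructor
      · intro hv
        rw [Finset.mem_filter] at hv
        obtain ⟨hvS, hi, ho⟩ := hv
        have hvE : v ∈ verts E := hvert ▸ hvS
        by_contra hx
        have hoE : outdeg E v ≠ 0 := by
          by_cases h0 : indeg E v = 0
          · rcases hN.root_outdeg v hvE h0 with h | h <;> omega
          · have := (hN.internal_deg v hvE h0 hx).2; omega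
        have := houtpos v hoE; omega
      · intro hv
        obtain ⟨hvE, hiE, hoE⟩ := leaf_spec hN hv
        have h1 := hinpos v (by omega)
        have h2 := indeg_mono hSE v
        have h3 := outdeg_mono hSE v
        exact Finset.mem_filter.mpr ⟨hvert ▸ hvE, by omega, by omega⟩
    · intro v hvS h0 hx
      have hvE : v ∈ verts E := hvert ▸ hvS
      have hile := indeg_mono hSE v
      have hole := outdeg_mono hSE v
      have hE0 : indeg E v ≠ 0 := by omega
      have hint := hN.internal_deg v hvE hE0 hx
      have := houtpos v (by omega)
      constructor <;> omega

/-- The map `S ↦ N[S]` is a bijection from the A-admissible subsets of `E(N)` onto the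
family of all support networks of `N` (identified with their edge sets); in particular,
`N[S]` is a support network of `N` iff `S` is an A-admissible subset of `E(N)`. -/
theorem stmt5 (p : ℕ) (hp : 1 ≤ p) (X : Finset V) (hX : X.Nonempty)
    (E : Finset (V × V)) (hN : IsPhyloNet E p X) :
    Set.BijOn (fun S : Finset (V × V) => S)
      {S | AAdmissible E E S} {S | IsSupportNet E S p X} ∧
    ∀ S ⊆ E, (IsSupportNet E S p X ↔ AAdmissible E E S) := by
  have hEq : {S | AAdmissible E E S} = {S : Finset (V × V) | IsSupportNet E S p X} := by
    ext S
    exact (support_iff_adm hN S).symm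
  constructor
  · rw [hEq]
    exact ⟨fun x hx => hx, fun x _ y _ h => h, fun y hy => ⟨y, hy, rfl⟩⟩
  · intro S _
    exact support_iff_adm hN S
end
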